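/- For a smooth function U, the corrected boundary-derivative combination through eighth order, (1/Δx)[U(x+Δx/2) − U(x−Δx/2)] − (1/Δx)Σ_{m∈{2,4,6,8}} c_m Δx^m [U⁽ᵐ⁾(x+Δx/2) − U⁽ᵐ⁾(x−Δx/2)] with (c₂,c₄,c₆,c₈) = (1/24, −7/5760, 31/967680, −127/154828800), equals U'(x) + O(Δx¹⁰). -/

import Mathlib

set_option maxHeartbeats 2000000
open Filter Asymptotics Topology


private lemma mvt_step {g : ℝ → ℝ} {n : ℕ} (hg : Differentiable ℝ g) (h0 : g 0 = 0)
    (hd : (deriv g) =O[𝓝 (0:ℝ)] fun h => h ^ n) :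
    g =O[𝓝 (0:ℝ)] fun h => h ^ (n + 1) := by
  obtain ⟨C, hC0, hC⟩ := hd.exists_nonneg
  rw [isBigOWith_iff, Metric.eventually_nhds_iff] at hC
  obtain ⟨ε, hε, hball⟩ := hC
  rw [isBigO_iff]
  refine ⟨C, Metric.eventually_nhds_iff.mpr ⟨ε, hε, fun h hh => ?_⟩⟩
  have hhe : |h| < ε := by simpa [Real.dist_eq] using hh
  have key : ∀ t ∈ Set.Icc (-|h|) (|h|), ‖deriv g t‖ ≤ C * |h| ^ n := by
    intro t ht
    have h1 : |t| ≤ |h| := abs_le.mpr ⟨ht.1, ht.2⟩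
    have h2 : dist t 0 < ε := by
      rw [Real.dist_eq, sub_zero]; exact lt_of_le_of_lt h1 hhe
    calc ‖deriv g t‖ ≤ C * ‖t ^ n‖ := hball h2
      _ = C * |t| ^ n := by rw [Real.norm_eq_abs, abs_pow]
      _ ≤ C * |h| ^ n := by
          exact mul_le_mul_of_nonneg_left (pow_le_pow_left₀ (abs_nonneg t) h1 n) hC0
  have hmvt := Convex.norm_image_sub_le_of_norm_deriv_le
    (fun t _ => hg t) key (convex_Icc _ _)
    (Set.mem_Icc.mpr ⟨neg_nonpos.mpr (abs_nonneg h), abs_nonneg h⟩)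
    (Set.mem_Icc.mpr ⟨neg_abs_le h, le_abs_self h⟩)
  rw [h0, sub_zero, sub_zero] at hmvt
  calc ‖g h‖ ≤ C * |h| ^ n * ‖h‖ := hmvt
    _ = C * ‖h ^ (n+1)‖ := by
        rw [Real.norm_eq_abs, Real.norm_eq_abs, abs_pow, pow_succ]; ring

private lemma taylorO (x s : ℝ) :
    ∀ (N : ℕ) (f : ℝ → ℝ), ContDiff ℝ N f →
      (fun h : ℝ => f (x + s * h)
          - ∑ k ∈ Finset.range N, (s * h) ^ k / (k.factorial : ℝ) * iteratedDeriv k f x)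
        =O[𝓝 (0:ℝ)] fun h => h ^ N := by
  intro N
  induction N with
  | zero =>
    intro f hf
    simp only [Finset.range_zero, Finset.sum_empty, sub_zero, pow_zero]
    have hc : Continuous (fun h : ℝ => f (x + s * h)) := hf.continuous.comp (by continuity)
    simpa using (hc.tendsto 0).isBigO_one ℝ
  | succ N IH =>
    intro f hf
    have hf' : ContDiff ℝ ((N : WithTop ℕ∞) + 1) f := by exact_mod_cast hf
    have hf1 : Differentiable ℝ f := hf'.differentiable (by simp)
    have hfd : ContDiff ℝ N (deriv f) := (contDiff_succ_iff_deriv.mp hf').2.2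
    have hder : ∀ h₀ : ℝ, HasDerivAt (fun h : ℝ => f (x + s * h)
          - ∑ k ∈ Finset.range (N+1), (s * h) ^ k / (k.factorial : ℝ) * iteratedDeriv k f x)
        (s * (deriv f (x + s * h₀)
          - ∑ j ∈ Finset.range N,
              (s * h₀) ^ j / (j.factorial : ℝ) * iteratedDeriv j (deriv f) x)) h₀ := by
      intro h₀
      have hlin : HasDerivAt (fun h : ℝ => x + s * h) s h₀ := by
        simpa using ((hasDerivAt_id h₀).const_mul s).const_add x
      have h1 : HasDerivAt (fun h : ℝ => f (x + s * h)) (deriv f (x + s * h₀) * s) h₀ :=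
        (hf1 _).hasDerivAt.comp h₀ hlin
      have h2 : ∀ k ∈ Finset.range (N+1),
          HasDerivAt (fun h : ℝ => (s * h) ^ k / (k.factorial : ℝ) * iteratedDeriv k f x)
          ((↑k * (s*h₀)^(k-1) * s) / (k.factorial : ℝ) * iteratedDeriv k f x) h₀ := by
        intro k _
        have hlin2 : HasDerivAt (fun h : ℝ => s * h) s h₀ := by
          simpa using (hasDerivAt_id h₀).const_mul s
        have hp := ((hasDerivAt_pow k (s * h₀)).comp h₀ hlin2).div_const (k.factorial : ℝ)
        exact (hp.mul_const _)
      have hsum := HasDerivAt.fun_sum h2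
      have hfin := h1.fun_sub hsum
      refine hfin.congr_deriv ?_
      symm
      rw [Finset.sum_range_succ']
      have hterm : ∀ j ∈ Finset.range N,
          ((↑(j+1) : ℝ) * (s*h₀)^((j+1)-1) * s) / ((j+1).factorial : ℝ)
              * iteratedDeriv (j+1) f x
            = s * ((s * h₀) ^ j / (j.factorial : ℝ) * iteratedDeriv j (deriv f) x) := by
        intro j _
        rw [iteratedDeriv_succ']
        have : ((j+1).factorial : ℝ) = (j+1) * (j.factorial : ℝ) := by
          rw [Nat.factorial_succ]; push_cast; ring
        rw [this]
        have hj : ((j:ℝ) + 1) ≠ 0 := by positivity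
        have hjf : (j.factorial : ℝ) ≠ 0 := Nat.cast_ne_zero.mpr j.factorial_ne_zero
        field_simp
        simp only [Nat.add_sub_cancel]
        push_cast
        ring
      rw [Finset.sum_congr rfl hterm, ← Finset.mul_sum]
      simp
      ring
    have hg0 : (fun h : ℝ => f (x + s * h)
        - ∑ k ∈ Finset.range (N+1), (s * h) ^ k / (k.factorial : ℝ) * iteratedDeriv k f x) 0
        = 0 := by
      simp [Finset.sum_range_succ']
    have hdiff : Differentiable ℝ (fun h : ℝ => f (x + s * h)
        - ∑ k ∈ Finset.range (N+1), (s * h) ^ k / (k.factorial : ℝ) * iteratedDeriv k f x) :=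
      fun h₀ => (hder h₀).differentiableAt
    have hO : deriv (fun h : ℝ => f (x + s * h)
        - ∑ k ∈ Finset.range (N+1), (s * h) ^ k / (k.factorial : ℝ) * iteratedDeriv k f x)
        =O[𝓝 (0:ℝ)] fun h => h ^ N := by
      have heq : deriv (fun h : ℝ => f (x + s * h)
          - ∑ k ∈ Finset.range (N+1), (s * h) ^ k / (k.factorial : ℝ) * iteratedDeriv k f x)
          = fun h₀ => s * (deriv f (x + s * h₀)
          - ∑ j ∈ Finset.range N,
              (s * h₀) ^ j / (j.factorial : ℝ) * iteratedDeriv j (deriv f) x) :=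
        funext fun h₀ => (hder h₀).deriv
      rw [heq]
      exact (IH (deriv f) hfd).const_mul_left s
    exact mvt_step hdiff hg0 hO


/-- For a smooth `U`, the corrected boundary-derivative combination through
eighth order, with coefficients `(c₂,c₄,c₆,c₈) = (1/24, −7/5760, 31/967680, −127/154828800)`,
equals `U'(x) + O(Δx¹⁰)`. -/
theorem stmt16 (U : ℝ → ℝ) (x : ℝ) (hU : ContDiff ℝ 11 U) :
    (fun h : ℝ => (U (x + h / 2) - U (x - h / 2)) / h
        - ((1 / 24) * h ^ 2 * (iteratedDeriv 2 U (x + h / 2) - iteratedDeriv 2 U (x - h / 2))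
            + (-7 / 5760) * h ^ 4 * (iteratedDeriv 4 U (x + h / 2) - iteratedDeriv 4 U (x - h / 2))
            + (31 / 967680) * h ^ 6 *
                (iteratedDeriv 6 U (x + h / 2) - iteratedDeriv 6 U (x - h / 2))
            + (-127 / 154828800) * h ^ 8 *
                (iteratedDeriv 8 U (x + h / 2) - iteratedDeriv 8 U (x - h / 2))) / h
        - deriv U x)
      =O[𝓝[>] (0 : ℝ)] (fun h : ℝ => h ^ 10) := by
  have hU11 : ContDiff ℝ (11:ℕ) U := by exact_mod_cast hU
  have hU2 : ContDiff ℝ (9:ℕ) (iteratedDeriv 2 U) := by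
    rw [iteratedDeriv_eq_iterate]; exact ContDiff.iterate_deriv' 9 2 (by exact_mod_cast hU)
  have hU4 : ContDiff ℝ (7:ℕ) (iteratedDeriv 4 U) := by
    rw [iteratedDeriv_eq_iterate]; exact ContDiff.iterate_deriv' 7 4 (by exact_mod_cast hU)
  have hU6 : ContDiff ℝ (5:ℕ) (iteratedDeriv 6 U) := by
    rw [iteratedDeriv_eq_iterate]; exact ContDiff.iterate_deriv' 5 6 (by exact_mod_cast hU)
  have hU8 : ContDiff ℝ (3:ℕ) (iteratedDeriv 8 U) := by
    rw [iteratedDeriv_eq_iterate]; exact ContDiff.iterate_deriv' 3 8 (by exact_mod_cast hU)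
  have hc2 : ∀ j : ℕ, iteratedDeriv j (iteratedDeriv 2 U) = iteratedDeriv (j + 2) U := fun j => by
    simp [iteratedDeriv_eq_iterate, Function.iterate_add_apply]
  have hc4 : ∀ j : ℕ, iteratedDeriv j (iteratedDeriv 4 U) = iteratedDeriv (j + 4) U := fun j => by
    simp [iteratedDeriv_eq_iterate, Function.iterate_add_apply]
  have hc6 : ∀ j : ℕ, iteratedDeriv j (iteratedDeriv 6 U) = iteratedDeriv (j + 6) U := fun j => by
    simp [iteratedDeriv_eq_iterate, Function.iterate_add_apply]
  have hc8 : ∀ j : ℕ, iteratedDeriv j (iteratedDeriv 8 U) = iteratedDeriv (j + 8) U := fun j => by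
    simp [iteratedDeriv_eq_iterate, Function.iterate_add_apply]
  have F := 𝓝[>] (0:ℝ)
  have hA := (taylorO x (1/2) 11 U hU11).mono (nhdsWithin_le_nhds (s := Set.Ioi (0:ℝ)))
  have hB := (taylorO x (-1/2) 11 U hU11).mono (nhdsWithin_le_nhds (s := Set.Ioi (0:ℝ)))
  have hA2 := (taylorO x (1/2) 9 (iteratedDeriv 2 U) hU2).mono
    (nhdsWithin_le_nhds (s := Set.Ioi (0:ℝ)))
  have hB2 := (taylorO x (-1/2) 9 (iteratedDeriv 2 U) hU2).mono
    (nhdsWithin_le_nhds (s := Set.Ioi (0:ℝ)))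
  have hA4 := (taylorO x (1/2) 7 (iteratedDeriv 4 U) hU4).mono
    (nhdsWithin_le_nhds (s := Set.Ioi (0:ℝ)))
  have hB4 := (taylorO x (-1/2) 7 (iteratedDeriv 4 U) hU4).mono
    (nhdsWithin_le_nhds (s := Set.Ioi (0:ℝ)))
  have hA6 := (taylorO x (1/2) 5 (iteratedDeriv 6 U) hU6).mono
    (nhdsWithin_le_nhds (s := Set.Ioi (0:ℝ)))
  have hB6 := (taylorO x (-1/2) 5 (iteratedDeriv 6 U) hU6).mono
    (nhdsWithin_le_nhds (s := Set.Ioi (0:ℝ)))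
  have hA8 := (taylorO x (1/2) 3 (iteratedDeriv 8 U) hU8).mono
    (nhdsWithin_le_nhds (s := Set.Ioi (0:ℝ)))
  have hB8 := (taylorO x (-1/2) 3 (iteratedDeriv 8 U) hU8).mono
    (nhdsWithin_le_nhds (s := Set.Ioi (0:ℝ)))
  -- weighted pieces
  have w2 := ((isBigO_refl (fun h : ℝ => h ^ 2) (𝓝[>] (0:ℝ))).mul (hA2.sub hB2)).const_mul_left
    ((1:ℝ)/24)
  have w4 := ((isBigO_refl (fun h : ℝ => h ^ 4) (𝓝[>] (0:ℝ))).mul (hA4.sub hB4)).const_mul_left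
    ((-7:ℝ)/5760)
  have w6 := ((isBigO_refl (fun h : ℝ => h ^ 6) (𝓝[>] (0:ℝ))).mul (hA6.sub hB6)).const_mul_left
    ((31:ℝ)/967680)
  have w8 := ((isBigO_refl (fun h : ℝ => h ^ 8) (𝓝[>] (0:ℝ))).mul (hA8.sub hB8)).const_mul_left
    ((-127:ℝ)/154828800)
  have e2 : (fun h : ℝ => h ^ 2 * h ^ 9) = fun h : ℝ => h ^ 11 := by funext h; ring
  have e4 : (fun h : ℝ => h ^ 4 * h ^ 7) = fun h : ℝ => h ^ 11 := by funext h; ring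
  have e6 : (fun h : ℝ => h ^ 6 * h ^ 5) = fun h : ℝ => h ^ 11 := by funext h; ring
  have e8 : (fun h : ℝ => h ^ 8 * h ^ 3) = fun h : ℝ => h ^ 11 := by funext h; ring
  rw [e2] at w2; rw [e4] at w4; rw [e6] at w6; rw [e8] at w8
  have hE := (hA.sub hB).sub (((w2.add w4).add w6).add w8)
  have hdiv := hE.mul (isBigO_refl (fun h : ℝ => h⁻¹) (𝓝[>] (0:ℝ)))
  refine hdiv.congr' ?_ ?_
  · filter_upwards [self_mem_nhdsWithin] with h hh
    have hne : h ≠ 0 := ne_of_gt hh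
    rw [show x + 1/2 * h = x + h/2 from by ring, show x + -1/2 * h = x - h/2 from by ring,
      show deriv U x = iteratedDeriv 1 U x from by rw [iteratedDeriv_one]]
    simp only [Finset.sum_range_succ, Finset.sum_range_zero, hc2, hc4, hc6, hc8,
      iteratedDeriv_zero]
    norm_num [Nat.factorial]
    field_simp
    ring
  · filter_upwards [self_mem_nhdsWithin] with h hh
    have hne : h ≠ 0 := ne_of_gt hh
    rw [pow_succ, mul_assoc, mul_inv_cancel₀ hne, mul_one]
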